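/- Let R = ℤ[x₁, x₂, …]/(xᵢxⱼ for j > i, xᵢ³ for all i), and let p = ⟨x₁, x₂, …⟩. Then p³ = 0, p = (0 : x₁²), the zero ideal of R is p-primary, and Ass R = {p} = Min R; moreover R is not Noetherian and not isoartinian, witnessed by the strictly descending chain Jₖ = ⟨x_{2k}, x_{2k+1}, …⟩ whose consecutive terms have distinct annihilators. -/

import Mathlib

set_option synthInstance.maxHeartbeats 1000000
set_option maxHeartbeats 1000000

/-- A commutative ring is isoartinian if every descending chain of ideals terminates
up to `R`-module isomorphism. -/
def IsoArtinian (R : Type*) [CommRing R] : Prop :=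
  ∀ f : ℕ → Ideal R, (∀ n, f (n + 1) ≤ f n) →
    ∃ n, ∀ m, n ≤ m → Nonempty ((f m : Submodule R R) ≃ₗ[R] (f n : Submodule R R))

/-- `R = ℤ[x₁, x₂, …]/(xᵢxⱼ for j > i, xᵢ³ for all i)`. -/
abbrev RingEx16 : Type _ :=
  MvPolynomial ℕ ℤ ⧸ (Ideal.span ({p : MvPolynomial ℕ ℤ |
      ∃ i j : ℕ, i < j ∧ p = MvPolynomial.X i * MvPolynomial.X j} ∪
    {p : MvPolynomial ℕ ℤ | ∃ i : ℕ, p = (MvPolynomial.X i) ^ 3}))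

/-- The residue class of `xᵢ` in `RingEx16`. -/
noncomputable def xEx16 (i : ℕ) : RingEx16 :=
  Ideal.Quotient.mk _ (MvPolynomial.X i : MvPolynomial ℕ ℤ)

/-- The ideal `p = ⟨x₁, x₂, …⟩` of `RingEx16`. -/
noncomputable def pEx16 : Ideal RingEx16 :=
  Ideal.span (Set.range xEx16)

/-- The ideal `Jₖ = ⟨x_{2k}, x_{2k+1}, …⟩` of `RingEx16`. -/
noncomputable def JEx16 (k : ℕ) : Ideal RingEx16 :=
  Ideal.span (Set.range fun i : ℕ => xEx16 (2 * k + i))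

section Aux

open MvPolynomial

abbrev Pg : Type := MvPolynomial ℕ ℤ

noncomputable abbrev Iex : Ideal Pg := Ideal.span ({p : Pg |
      ∃ i j : ℕ, i < j ∧ p = MvPolynomial.X i * MvPolynomial.X j} ∪
    {p : Pg | ∃ i : ℕ, p = (MvPolynomial.X i) ^ 3})

noncomputable abbrev mkq : Pg →+* RingEx16 := Ideal.Quotient.mk Iex


/-- good monomials -/
def Good (d : ℕ →₀ ℕ) : Prop :=
  d = 0 ∨ ∃ i, d = Finsupp.single i 1 ∨ d = Finsupp.single i 2

lemma le_single {a : ℕ →₀ ℕ} {i n : ℕ} (h : a ≤ Finsupp.single i n) :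
    a = Finsupp.single i (a i) ∧ a i ≤ n := by
  rw [Finsupp.le_def] at h
  constructor
  · ext j
    rcases eq_or_ne j i with rfl | hj
    · simp
    · have := h j
      simp [Finsupp.single_apply, hj, Ne.symm hj] at this ⊢
      omega
  · simpa using h i

lemma good_dc {a b : ℕ →₀ ℕ} (hle : b ≤ a) (ha : Good a) : Good b := by
  rcases ha with rfl | ⟨i, rfl | rfl⟩
  · left; exact le_antisymm hle zero_le
  · obtain ⟨hb, hbi⟩ := le_single hle
    interval_cases h : b i
    · left; rw [hb]; simp
    · right; exact ⟨i, Or.inl (by rw [hb])⟩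
  · obtain ⟨hb, hbi⟩ := le_single hle
    interval_cases h : b i
    · left; rw [hb]; simp
    · right; exact ⟨i, Or.inl (by rw [hb])⟩
    · right; exact ⟨i, Or.inr (by rw [hb])⟩
open MvPolynomial


/-- ideal of polynomials whose coefficients vanish on a downward-closed set S -/
noncomputable def coIdeal (S : Set (ℕ →₀ ℕ)) (hS : ∀ ⦃a b : ℕ →₀ ℕ⦄, b ≤ a → a ∈ S → b ∈ S) :
    Ideal (MvPolynomial ℕ ℤ) where
  carrier := {f | ∀ d ∈ S, coeff d f = 0}
  zero_mem' := by intro d _; simp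
  add_mem' := by intro f g hf hg d hd; simp [coeff_add, hf d hd, hg d hd]
  smul_mem' := by
    intro g f hf d hd
    rw [smul_eq_mul, coeff_mul]
    apply Finset.sum_eq_zero
    rintro ⟨a, b⟩ hab
    have h1 : a + b = d := Finset.HasAntidiagonal.mem_antidiagonal.mp hab
    have h2 : b ≤ d := h1 ▸ le_add_self
    rw [hf b (hS h2 hd), mul_zero]

lemma mem_coIdeal {S hS} {f : MvPolynomial ℕ ℤ} :
    f ∈ coIdeal S hS ↔ ∀ d ∈ S, coeff d f = 0 := Iff.rfl

noncomputable def Kex : Ideal (MvPolynomial ℕ ℤ) := coIdeal {d | Good d} (fun _ _ h ha => good_dc h ha)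

lemma X_mul_X (i j : ℕ) : (X i * X j : MvPolynomial ℕ ℤ) =
    monomial (Finsupp.single i 1 + Finsupp.single j 1) 1 := by
  rw [X, X, monomial_mul, mul_one]

lemma single_ne_zero_at {m k i : ℕ} (h : (Finsupp.single m k) i ≠ 0) : m = i := by
  by_contra hmi
  simp [Finsupp.single_apply, hmi] at h

lemma gen_mem_Kex_mul {i j : ℕ} (hij : i < j) : (X i * X j : MvPolynomial ℕ ℤ) ∈ Kex := by
  intro d hd
  rw [X_mul_X, coeff_monomial]
  split_ifs with h
  · exfalso
    have hdi : d i ≠ 0 := by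
      rw [← h]; simp [Finsupp.single_apply, hij.ne, hij.ne']
    have hdj : d j ≠ 0 := by
      rw [← h]; simp [Finsupp.single_apply, hij.ne, hij.ne']
    rcases hd with rfl | ⟨m, rfl | rfl⟩
    · simp at hdi
    · have h1 := single_ne_zero_at hdi
      have h2 := single_ne_zero_at hdj
      omega
    · have h1 := single_ne_zero_at hdi
      have h2 := single_ne_zero_at hdj
      omega
  · rfl

lemma gen_mem_Kex_pow (i : ℕ) : ((X i : MvPolynomial ℕ ℤ) ^ 3) ∈ Kex := by
  intro d hd
  rw [X_pow_eq_monomial, coeff_monomial]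
  split_ifs with h
  · exfalso
    have hdi : d i = 3 := by rw [← h]; simp
    rcases hd with rfl | ⟨m, rfl | rfl⟩
    · simp at hdi
    · simp only [Finsupp.single_apply] at hdi; split_ifs at hdi <;> omega
    · simp only [Finsupp.single_apply] at hdi; split_ifs at hdi <;> omega
  · rfl

lemma bad_monomial_mem {d : ℕ →₀ ℕ} (hd : ¬ Good d) (c : ℤ) :
    (monomial d c : MvPolynomial ℕ ℤ) ∈ Iex := by
  by_cases h1 : ∃ i j, i < j ∧ d i ≠ 0 ∧ d j ≠ 0
  · obtain ⟨i, j, hij, hi, hj⟩ := h1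
    have hle : Finsupp.single i 1 + Finsupp.single j 1 ≤ d := by
      rw [Finsupp.le_def]; intro m
      simp only [Finsupp.add_apply, Finsupp.single_apply]
      by_cases h2 : i = m <;> by_cases h3 : j = m <;> subst_vars <;> simp_all <;> omega
    have key : (monomial d c : MvPolynomial ℕ ℤ) =
        monomial (d - (Finsupp.single i 1 + Finsupp.single j 1)) c * (X i * X j) := by
      rw [X_mul_X, monomial_mul, mul_one, tsub_add_cancel_of_le hle]
    rw [key]
    exact Ideal.mul_mem_left _ _ (Ideal.subset_span (Or.inl ⟨i, j, hij, rfl⟩))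
  · push_neg at h1
    have h2 : ∃ i, d i ≠ 0 := by
      by_contra h
      push_neg at h
      exact hd (Or.inl (Finsupp.ext fun i => h i))
    obtain ⟨i, hi⟩ := h2
    have hsingle : d = Finsupp.single i (d i) := by
      ext j
      rcases eq_or_ne j i with rfl | hj
      · simp
      · have hdj : d j = 0 := by
          rcases lt_or_gt_of_ne hj with h | h
          · by_contra hji; exact hi (h1 j i h hji)
          · exact h1 i j h hi
        simp [Finsupp.single_apply, Ne.symm hj, hdj]
    have h3 : 3 ≤ d i := by
      by_contra h
      push_neg at h
      interval_cases h' : d i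
      · exact hi rfl
      · exact hd (Or.inr ⟨i, Or.inl hsingle⟩)
      · exact hd (Or.inr ⟨i, Or.inr hsingle⟩)
    have key : (monomial d c : MvPolynomial ℕ ℤ) =
        monomial (Finsupp.single i (d i - 3)) c * (X i ^ 3) := by
      rw [X_pow_eq_monomial, monomial_mul, mul_one, ← Finsupp.single_add]
      have : d i - 3 + 3 = d i := by omega
      rw [this, ← hsingle]
    rw [key]
    exact Ideal.mul_mem_left _ _ (Ideal.subset_span (Or.inr ⟨i, rfl⟩))
lemma Iex_eq_Kex : Iex = Kex := by
  apply le_antisymm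
  · rw [Ideal.span_le]
    rintro f (⟨i, j, hij, rfl⟩ | ⟨i, rfl⟩)
    · exact gen_mem_Kex_mul hij
    · exact gen_mem_Kex_pow i
  · intro f hf
    rw [as_sum f]
    apply Ideal.sum_mem
    intro d hd
    apply bad_monomial_mem
    intro hgood
    exact (mem_support_iff.mp hd) (hf d hgood)

/-! ### degree and the cancellation lemma -/

def deg (d : ℕ →₀ ℕ) : ℕ := d.sum fun _ n => n

lemma deg_add (a b : ℕ →₀ ℕ) : deg (a + b) = deg a + deg b :=
  Finsupp.sum_add_index' (fun _ => rfl) (fun _ _ _ => rfl)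

lemma deg_eq_zero {d : ℕ →₀ ℕ} (h : deg d = 0) : d = 0 := by
  ext i
  by_cases hi : i ∈ d.support
  · exact absurd ((Finset.sum_eq_zero_iff).mp h i hi) (Finsupp.mem_support_iff.mp hi)
  · simpa using Finsupp.notMem_support_iff.mp hi

lemma cancel {f g : MvPolynomial ℕ ℤ} (hg : coeff 0 g ≠ 0)
    (h : ∀ d, Good d → coeff d (f * g) = 0) : ∀ d, Good d → coeff d f = 0 := by
  suffices H : ∀ n d, deg d = n → Good d → coeff d f = 0 by
    intro d hd; exact H (deg d) d rfl hd
  intro n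
  induction n using Nat.strong_induction_on with
  | _ n ih =>
    intro d hdeg hd
    have key := h d hd
    rw [coeff_mul, Finset.sum_eq_single (d, 0)] at key
    · rcases mul_eq_zero.mp key with h1 | h1
      · exact h1
      · exact absurd h1 hg
    · rintro ⟨a, b⟩ hab hne
      have h1 : a + b = d := Finset.HasAntidiagonal.mem_antidiagonal.mp hab
      have hb : b ≠ 0 := by
        rintro rfl
        exact hne (by simp [← h1])
      have ha : Good a := good_dc (le_of_eq_of_le (rfl : a = a) (h1 ▸ (le_add_self.trans_eq (add_comm b a)))) hd
      have hlt : deg a < n := by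
        have := deg_add a b
        rw [h1, hdeg] at this
        have hbne : deg b ≠ 0 := fun hz => hb (deg_eq_zero hz)
        omega
      rw [ih (deg a) hlt a rfl ha, zero_mul]
    · intro habs
      exact absurd (Finset.HasAntidiagonal.mem_antidiagonal.mpr (by simp)) habs

/-! ### variable-restricted ideals -/

def GoodT (T : Set ℕ) (d : ℕ →₀ ℕ) : Prop :=
  d = 0 ∨ ∃ i ∉ T, d = Finsupp.single i 1 ∨ d = Finsupp.single i 2

lemma goodT_dc {T : Set ℕ} {a b : ℕ →₀ ℕ} (hle : b ≤ a) (ha : GoodT T d) : True := trivial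

lemma goodT_dc' {T : Set ℕ} : ∀ ⦃a b : ℕ →₀ ℕ⦄, b ≤ a → a ∈ {d | GoodT T d} → b ∈ {d | GoodT T d} := by
  intro a b hle ha
  rcases ha with rfl | ⟨i, hiT, rfl | rfl⟩
  · left; exact le_antisymm hle zero_le
  · obtain ⟨hb, hbi⟩ := le_single hle
    interval_cases h : b i
    · left; rw [hb]; simp
    · right; exact ⟨i, hiT, Or.inl hb⟩
  · obtain ⟨hb, hbi⟩ := le_single hle
    interval_cases h : b i
    · left; rw [hb]; simp
    · right; exact ⟨i, hiT, Or.inl hb⟩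
    · right; exact ⟨i, hiT, Or.inr hb⟩

lemma goodT_good {T : Set ℕ} {d : ℕ →₀ ℕ} (h : GoodT T d) : Good d := by
  rcases h with rfl | ⟨i, _, h | h⟩
  · left; rfl
  · right; exact ⟨i, Or.inl h⟩
  · right; exact ⟨i, Or.inr h⟩

noncomputable def LTideal (T : Set ℕ) : Ideal (MvPolynomial ℕ ℤ) :=
  coIdeal {d | GoodT T d} goodT_dc'

noncomputable def spanT (T : Set ℕ) : Ideal (MvPolynomial ℕ ℤ) :=
  Ideal.span (MvPolynomial.X '' T)

lemma spanT_le_LT (T : Set ℕ) : spanT T ≤ LTideal T := by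
  rw [spanT, Ideal.span_le]
  rintro f ⟨i, hiT, rfl⟩
  intro d hd
  rw [coeff_X']
  split_ifs with h
  · exfalso
    rcases hd with rfl | ⟨j, hjT, rfl | rfl⟩
    · exact absurd (DFunLike.congr_fun h i) (by simp)
    · have : i = j := by
        by_contra h2
        have := DFunLike.congr_fun h j
        simp [Finsupp.single_apply, h2] at this
      exact hjT (this ▸ hiT)
    · have := DFunLike.congr_fun h i
      by_cases h2 : j = i <;> simp [Finsupp.single_apply, h2] at this
  · rfl

lemma Kex_le_LT (T : Set ℕ) : Kex ≤ LTideal T := fun f hf d hd => hf d (goodT_good hd)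

lemma LT_le_sup (T : Set ℕ) : LTideal T ≤ spanT T ⊔ Iex := by
  intro f hf
  rw [as_sum f]
  apply Ideal.sum_mem
  intro d hd
  by_cases hgood : Good d
  · rcases hgood with rfl | ⟨i, rfl | rfl⟩
    · exact absurd (hf 0 (Or.inl rfl)) (mem_support_iff.mp hd)
    · have hiT : i ∈ T := by
        by_contra hiT
        exact (mem_support_iff.mp hd) (hf _ (Or.inr ⟨i, hiT, Or.inl rfl⟩))
      apply Ideal.mem_sup_left
      have : (monomial (Finsupp.single i 1) (coeff (Finsupp.single i 1) f) : MvPolynomial ℕ ℤ)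
          = C (coeff (Finsupp.single i 1) f) * X i ^ 1 := by
        rw [C_mul_X_pow_eq_monomial]
      rw [this, pow_one]
      exact Ideal.mul_mem_left _ _ (Ideal.subset_span ⟨i, hiT, rfl⟩)
    · have hiT : i ∈ T := by
        by_contra hiT
        exact (mem_support_iff.mp hd) (hf _ (Or.inr ⟨i, hiT, Or.inr rfl⟩))
      apply Ideal.mem_sup_left
      have : (monomial (Finsupp.single i 2) (coeff (Finsupp.single i 2) f) : MvPolynomial ℕ ℤ)
          = (C (coeff (Finsupp.single i 2) f) * X i) * X i := by
        rw [mul_assoc, ← pow_two, C_mul_X_pow_eq_monomial]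
      rw [this]
      exact Ideal.mul_mem_left _ _ (Ideal.subset_span ⟨i, hiT, rfl⟩)
  · exact Ideal.mem_sup_right (bad_monomial_mem hgood _)

/-! ### quotient-level lemmas -/

lemma mk_surj : Function.Surjective mkq := Ideal.Quotient.mk_surjective

lemma mk_eq_zero {f : MvPolynomial ℕ ℤ} :
    mkq f = 0 ↔ ∀ d, Good d → coeff d f = 0 := by
  rw [Ideal.Quotient.eq_zero_iff_mem, Iex_eq_Kex]
  exact Iff.rfl

lemma mem_mapT {T : Set ℕ} {f : MvPolynomial ℕ ℤ} :
    mkq f ∈ Ideal.map mkq (spanT T) ↔ ∀ d, GoodT T d → coeff d f = 0 := by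
  constructor
  · intro h
    have h2 : f ∈ Ideal.comap mkq (Ideal.map mkq (spanT T)) := h
    rw [Ideal.comap_map_of_surjective mkq mk_surj, ← RingHom.ker_eq_comap_bot,
      Ideal.mk_ker] at h2
    exact sup_le (spanT_le_LT T) (Iex_eq_Kex ▸ Kex_le_LT T) h2
  · intro h
    have h2 := Ideal.mem_map_of_mem mkq (LT_le_sup T h)
    rwa [Ideal.map_sup, Ideal.map_quotient_self, sup_bot_eq] at h2

lemma pEx16_eq : pEx16 = Ideal.map mkq (spanT Set.univ) := by
  rw [pEx16, spanT, Ideal.map_span, Set.image_univ]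
  congr 1
  show Set.range (mkq ∘ X) = mkq '' Set.range X
  rw [Set.range_comp]

lemma mem_p {f : MvPolynomial ℕ ℤ} : mkq f ∈ pEx16 ↔ coeff 0 f = 0 := by
  rw [pEx16_eq, mem_mapT]
  constructor
  · intro h; exact h 0 (Or.inl rfl)
  · rintro h d (rfl | ⟨i, hi, _⟩)
    · exact h
    · exact absurd (Set.mem_univ i) hi

lemma JEx16_eq (k : ℕ) : JEx16 k = Ideal.map mkq (spanT {j | 2 * k ≤ j}) := by
  rw [JEx16, spanT, Ideal.map_span]
  congr 1
  ext y
  simp only [Set.mem_range, Set.mem_image, Set.mem_setOf_eq]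
  constructor
  · rintro ⟨i, rfl⟩
    exact ⟨X (2 * k + i), ⟨2 * k + i, by omega, rfl⟩, rfl⟩
  · rintro ⟨_, ⟨j, hj, rfl⟩, rfl⟩
    exact ⟨j - 2 * k, by have h2 : 2 * k ≤ j := hj; show mkq (X _) = mkq (X j); congr 2; omega⟩

lemma mem_J {k : ℕ} {f : MvPolynomial ℕ ℤ} :
    mkq f ∈ JEx16 k ↔ ∀ d, GoodT {j | 2 * k ≤ j} d → coeff d f = 0 := by
  rw [JEx16_eq, mem_mapT]

lemma one_not_mem : (1 : MvPolynomial ℕ ℤ) ∉ Iex := by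
  rw [Iex_eq_Kex]
  intro h
  simpa using h 0 (Or.inl rfl)

lemma Iex_ne_top : Iex ≠ ⊤ := by
  intro h
  exact one_not_mem (h ▸ Submodule.mem_top)

instance : Nontrivial RingEx16 := Ideal.Quotient.nontrivial_iff.mpr Iex_ne_top

lemma p_prime : pEx16.IsPrime := by
  constructor
  · intro h
    rw [Ideal.eq_top_iff_one] at h
    have h2 : mkq 1 ∈ pEx16 := by rwa [map_one]
    simpa using mem_p.mp h2
  · intro a b hab
    obtain ⟨f, rfl⟩ := mk_surj a
    obtain ⟨g, rfl⟩ := mk_surj b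
    rw [← map_mul, mem_p] at hab
    rw [mem_p, mem_p]
    have : coeff 0 (f * g) = coeff 0 f * coeff 0 g := by
      have := map_mul constantCoeff f g
      simpa [constantCoeff_eq] using this
    rw [this] at hab
    exact mul_eq_zero.mp hab

/-! ### p^3 = 0 -/

lemma deg_mono {a b : ℕ →₀ ℕ} (h : b ≤ a) : deg b ≤ deg a := by
  have h2 := deg_add (a - b) b
  rw [tsub_add_cancel_of_le h] at h2
  omega

noncomputable def A1 : Ideal (MvPolynomial ℕ ℤ) :=
  coIdeal {d | d = 0} (fun a b hle ha => by
    simp only [Set.mem_setOf_eq] at ha ⊢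
    subst ha
    exact le_antisymm hle zero_le)

noncomputable def A2 : Ideal (MvPolynomial ℕ ℤ) :=
  coIdeal {d | deg d ≤ 1} (fun a b hle ha => (deg_mono hle).trans ha)

lemma deg_single (i n : ℕ) : deg (Finsupp.single i n) = n := by
  rw [deg, Finsupp.sum_single_index]; rfl

lemma good_deg {d : ℕ →₀ ℕ} (h : Good d) : deg d ≤ 2 := by
  rcases h with rfl | ⟨i, rfl | rfl⟩
  · simp [deg]
  · rw [deg_single]; omega
  · rw [deg_single]

lemma spanT_univ_le_A1 : spanT Set.univ ≤ A1 := by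
  rw [spanT, Ideal.span_le]
  rintro f ⟨i, -, rfl⟩ d hd
  simp only [Set.mem_setOf_eq] at hd
  subst hd
  exact coeff_zero_X i

lemma A1_mul_A1 : A1 * A1 ≤ A2 := by
  rw [Ideal.mul_le]
  intro f hf g hg d hd
  simp only [Set.mem_setOf_eq] at hd
  rw [coeff_mul]
  apply Finset.sum_eq_zero
  rintro ⟨a, b⟩ hab
  have h1 : a + b = d := Finset.HasAntidiagonal.mem_antidiagonal.mp hab
  have h2 : deg a + deg b ≤ 1 := by rw [← deg_add, h1]; exact hd
  rcases Nat.eq_zero_or_pos (deg a) with h3 | h3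
  · rw [hf a (deg_eq_zero h3), zero_mul]
  · have h4 : deg b = 0 := by omega
    rw [hg b (deg_eq_zero h4), mul_zero]

lemma A2_mul_A1 : A2 * A1 ≤ Kex := by
  rw [Ideal.mul_le]
  intro g hg f hf d hd
  rw [coeff_mul]
  apply Finset.sum_eq_zero
  rintro ⟨a, b⟩ hab
  have h1 : a + b = d := Finset.HasAntidiagonal.mem_antidiagonal.mp hab
  rcases Nat.eq_zero_or_pos (deg b) with h3 | h3
  · rw [hf b (deg_eq_zero h3), mul_zero]
  · have h2 : deg a + deg b ≤ 2 := by rw [← deg_add, h1]; exact good_deg hd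
    have h4 : deg a ≤ 1 := by omega
    rw [hg a h4, zero_mul]

lemma p_cubed : pEx16 ^ 3 = ⊥ := by
  rw [pEx16_eq, ← Ideal.map_pow]
  have key : spanT Set.univ ^ 3 ≤ Iex := by
    have h1 : spanT Set.univ ^ 3 = spanT Set.univ * spanT Set.univ * spanT Set.univ := by
      rw [pow_succ, pow_two]
    rw [h1, Iex_eq_Kex]
    calc spanT Set.univ * spanT Set.univ * spanT Set.univ
        ≤ A1 * A1 * A1 :=
          Ideal.mul_mono (Ideal.mul_mono spanT_univ_le_A1 spanT_univ_le_A1) spanT_univ_le_A1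
      _ ≤ A2 * A1 := Ideal.mul_mono_left A1_mul_A1
      _ ≤ Kex := A2_mul_A1
  have h2 := Ideal.map_mono (f := mkq) key
  rw [Ideal.map_quotient_self] at h2
  exact le_bot_iff.mp h2

/-! ### p = (0 : x₀²) -/

lemma p_eq_torsion : pEx16 = Ideal.torsionOf RingEx16 RingEx16 (xEx16 0 ^ 2) := by
  ext a
  obtain ⟨f, rfl⟩ := mk_surj a
  rw [Ideal.mem_torsionOf_iff, mem_p]
  have hx2 : (xEx16 0 : RingEx16) ^ 2 = mkq (X 0 ^ 2) := by rw [map_pow]; rfl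
  rw [hx2, smul_eq_mul]
  show coeff 0 f = 0 ↔ mkq f * mkq (X 0 ^ 2) = 0
  rw [← map_mul, mk_eq_zero]
  have hX2 : (X 0 ^ 2 : MvPolynomial ℕ ℤ) = monomial (Finsupp.single 0 2) 1 :=
    X_pow_eq_monomial
  constructor
  · intro h d hd
    rw [hX2, coeff_mul_monomial']
    split_ifs with hle
    · rcases hd with rfl | ⟨i, rfl | rfl⟩
      · exfalso
        have := Finsupp.le_def.mp hle 0
        simp at this
      · exfalso
        have h1 := Finsupp.le_def.mp hle 0
        simp only [Finsupp.single_apply, if_pos rfl] at h1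
        split_ifs at h1 <;> omega
      · rcases eq_or_ne i 0 with rfl | hi
        · simp [h]
        · exfalso
          have h1 := Finsupp.le_def.mp hle 0
          simp [Finsupp.single_apply, hi] at h1
    · rfl
  · intro h
    have h2 := h (Finsupp.single 0 2) (Or.inr ⟨0, Or.inr rfl⟩)
    rw [hX2, coeff_mul_monomial'] at h2
    simpa using h2

/-! ### radical, primary, associated and minimal primes -/

lemma p_le_radical : pEx16 ≤ (⊥ : Ideal RingEx16).radical := fun a ha =>
  ⟨3, by rw [← p_cubed]; exact Ideal.pow_mem_pow ha 3⟩

lemma radical_bot : (⊥ : Ideal RingEx16).radical = pEx16 := by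
  apply le_antisymm
  · intro a ha
    obtain ⟨n, hn⟩ := ha
    obtain ⟨f, rfl⟩ := mk_surj a
    rw [Ideal.mem_bot, ← map_pow, mk_eq_zero] at hn
    rw [mem_p]
    have h0 := hn 0 (Or.inl rfl)
    have hpow : coeff 0 (f ^ n) = (coeff 0 f) ^ n := by
      have := map_pow constantCoeff f n
      simpa [constantCoeff_eq] using this
    rw [hpow] at h0
    rcases Nat.eq_zero_or_pos n with rfl | hnpos
    · simp at h0
    · exact pow_eq_zero_iff hnpos.ne'  |>.mp h0
  · exact p_le_radical

lemma bot_primary : (⊥ : Ideal RingEx16).IsPrimary := by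
  rw [Ideal.isPrimary_iff]
  constructor
  · intro h
    have h1 := (Ideal.eq_top_iff_one _).mp h
    rw [Ideal.mem_bot] at h1
    exact one_ne_zero h1
  · intro x y hxy
    by_cases hy : y ∈ pEx16
    · right; rwa [radical_bot]
    · left
      obtain ⟨f, rfl⟩ := mk_surj x
      obtain ⟨g, rfl⟩ := mk_surj y
      rw [mem_p] at hy
      rw [Ideal.mem_bot, ← map_mul, mk_eq_zero] at hxy
      rw [Ideal.mem_bot, mk_eq_zero]
      exact cancel hy hxy

lemma ann_span_singleton (y : RingEx16) :
    (Submodule.span RingEx16 {y}).annihilator = Ideal.torsionOf RingEx16 RingEx16 y :=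
  Ideal.ext fun a => by
    rw [Submodule.mem_annihilator_span_singleton y a, Ideal.mem_torsionOf_iff]

lemma p_le_prime {Q : Ideal RingEx16} (hQ : Q.IsPrime) : pEx16 ≤ Q := by
  rw [← hQ.radical, ← radical_bot]
  exact Ideal.radical_mono bot_le

lemma ass_eq : associatedPrimes RingEx16 RingEx16 = {pEx16} := by
  ext I
  simp only [Set.mem_singleton_iff]
  constructor
  · rintro ⟨hprime, y, rfl⟩
    apply le_antisymm
    · intro a haI
      by_contra hap
      have hy : y ≠ 0 := by
        rintro rfl
        apply hprime.ne_top
        rw [Submodule.colon_singleton_zero, Ideal.radical_top]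
      obtain ⟨n, haI⟩ := haI
      have hap' : a ^ n ∉ pEx16 := fun h => hap (p_prime.mem_of_pow_mem n h)
      have hay : a ^ n • y = 0 := by simpa using Submodule.mem_colon_singleton.mp haI
      obtain ⟨f, hf⟩ := mk_surj (a ^ n)
      obtain ⟨g, rfl⟩ := mk_surj y
      rw [← hf, mem_p] at hap'
      rw [← hf, smul_eq_mul, ← map_mul, mk_eq_zero] at hay
      apply hy
      rw [mk_eq_zero]
      exact cancel hap' (by rwa [mul_comm])
    · exact p_le_prime hprime
  · rintro rfl
    refine ⟨p_prime, xEx16 0 ^ 2, ?_⟩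
    rw [show (⊥ : Submodule RingEx16 RingEx16).colon {xEx16 0 ^ 2} = pEx16 from
      Ideal.ext fun a => by
        rw [Submodule.mem_colon_singleton, Submodule.mem_bot, p_eq_torsion,
          Ideal.mem_torsionOf_iff], p_prime.radical]

lemma min_eq : minimalPrimes RingEx16 = {pEx16} := by
  ext Q
  simp only [Set.mem_singleton_iff]
  constructor
  · intro hQ
    obtain ⟨⟨hQp, -⟩, hmin⟩ := hQ
    exact le_antisymm (hmin ⟨p_prime, bot_le⟩ (p_le_prime hQp)) (p_le_prime hQp)
  · rintro rfl
    exact ⟨⟨p_prime, bot_le⟩, fun Q' hQ' _ => p_le_prime hQ'.1⟩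

/-! ### not noetherian -/

lemma not_noeth : ¬ IsNoetherianRing RingEx16 := by
  intro h
  have h1 : IsNoetherian RingEx16 RingEx16 := h
  obtain ⟨n, hn⟩ := monotone_stabilizes_iff_noetherian.mpr h1
    ⟨fun n => Ideal.map mkq (spanT {i | i ≤ n}), by
      intro a b hab
      exact Ideal.map_mono (Ideal.span_mono (Set.image_mono (fun i hi => le_trans hi hab)))⟩
  have h2 : Ideal.map mkq (spanT {i | i ≤ n}) = Ideal.map mkq (spanT {i | i ≤ n + 1}) :=
    hn (n + 1) (Nat.le_succ n)
  have h3 : mkq (X (n + 1)) ∈ Ideal.map mkq (spanT {i | i ≤ n + 1}) :=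
    Ideal.mem_map_of_mem mkq (Ideal.subset_span ⟨n + 1, by simp, rfl⟩)
  rw [← h2] at h3
  have h4 := mem_mapT.mp h3 (Finsupp.single (n + 1) 1)
    (Or.inr ⟨n + 1, by simp, Or.inl rfl⟩)
  rw [coeff_X, if_pos rfl] at h4
  exact one_ne_zero h4

/-! ### the chain J_k -/

lemma J_succ_le (k : ℕ) : JEx16 (k + 1) ≤ JEx16 k := by
  rw [JEx16_eq, JEx16_eq]
  exact Ideal.map_mono (Ideal.span_mono (Set.image_mono (fun j hj => by
    simp only [Set.mem_setOf_eq] at hj ⊢; omega)))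

lemma x_mem_J (k : ℕ) : xEx16 (2 * k) ∈ JEx16 k := by
  rw [JEx16_eq]
  exact Ideal.mem_map_of_mem _ (Ideal.subset_span ⟨2 * k, by simp, rfl⟩)

lemma x_not_mem_J_succ (k : ℕ) : xEx16 (2 * k) ∉ JEx16 (k + 1) := by
  intro h
  rw [show xEx16 (2 * k) = mkq (X (2 * k)) from rfl, mem_J] at h
  have h2 := h (Finsupp.single (2 * k) 1)
    (Or.inr ⟨2 * k, by simp only [Set.mem_setOf_eq]; omega, Or.inl rfl⟩)
  rw [coeff_X, if_pos rfl] at h2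
  exact one_ne_zero h2

lemma J_lt (k : ℕ) : JEx16 (k + 1) < JEx16 k :=
  lt_of_le_of_ne (J_succ_le k) (fun h => x_not_mem_J_succ k (by rw [h]; exact x_mem_J k))

noncomputable def BT (T : Set ℕ) : Ideal (MvPolynomial ℕ ℤ) :=
  coIdeal {d | ∀ j ∈ T, d j = 0} (fun a b hle ha j hj =>
    Nat.le_zero.mp ((Finsupp.le_def.mp hle j).trans_eq (ha j hj)))

lemma spanT_le_BT (T : Set ℕ) : spanT T ≤ BT T := by
  rw [spanT, Ideal.span_le]
  rintro f ⟨i, hiT, rfl⟩ d hd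
  rw [coeff_X']
  split_ifs with h
  · exfalso
    have h1 := hd i hiT
    rw [← h] at h1
    simp at h1
  · rfl

lemma xann {k : ℕ} {g : MvPolynomial ℕ ℤ} (hg : g ∈ BT {j | 2 * (k + 1) ≤ j}) :
    (X (2 * k) * g : MvPolynomial ℕ ℤ) ∈ Kex := by
  intro d hd
  rw [X, coeff_monomial_mul']
  split_ifs with hle
  · have h2k : d (2 * k) ≠ 0 := by
      have := Finsupp.le_def.mp hle (2 * k)
      simp at this
      omega
    rcases hd with rfl | ⟨i, rfl | rfl⟩
    · simp at h2k
    · have hi := single_ne_zero_at h2k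
      subst hi
      rw [one_mul]
      apply hg
      intro j hj
      simp only [Set.mem_setOf_eq] at hj
      have hji : 2 * k ≠ j := by omega
      simp [Finsupp.tsub_apply, Finsupp.single_apply, hji]
    · have hi := single_ne_zero_at h2k
      subst hi
      rw [one_mul]
      apply hg
      intro j hj
      simp only [Set.mem_setOf_eq] at hj
      have hji : 2 * k ≠ j := by omega
      simp [Finsupp.tsub_apply, Finsupp.single_apply, hji]
  · rfl

lemma x_mem_ann_succ (k : ℕ) : xEx16 (2 * k) ∈ (JEx16 (k + 1)).annihilator := by
  rw [Submodule.mem_annihilator]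
  intro b hb
  rw [JEx16_eq] at hb
  obtain ⟨g, hg, rfl⟩ := (Ideal.mem_map_iff_of_surjective mkq mk_surj).mp hb
  show xEx16 (2 * k) • mkq g = 0
  rw [smul_eq_mul, show xEx16 (2 * k) = mkq (X (2 * k)) from rfl, ← map_mul, mk_eq_zero]
  exact xann (spanT_le_BT _ hg)

lemma x_not_mem_ann (k : ℕ) : xEx16 (2 * k) ∉ (JEx16 k).annihilator := by
  intro h
  have h2 := Submodule.mem_annihilator.mp h _ (x_mem_J k)
  rw [smul_eq_mul, show xEx16 (2 * k) = mkq (X (2 * k)) from rfl, ← map_mul, mk_eq_zero] at h2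
  have h3 := h2 (Finsupp.single (2 * k) 2) (Or.inr ⟨2 * k, Or.inr rfl⟩)
  rw [← pow_two, X_pow_eq_monomial, coeff_monomial] at h3
  simp at h3

lemma ann_ne (k : ℕ) : (JEx16 (k + 1)).annihilator ≠ (JEx16 k).annihilator := by
  intro h
  exact x_not_mem_ann k (h ▸ x_mem_ann_succ k)

/-! ### annihilator is an iso invariant -/

lemma ann_eq_of_iso {R M : Type*} [CommRing R] [AddCommGroup M] [Module R M]
    {N N' : Submodule R M} (e : N ≃ₗ[R] N') : N.annihilator = N'.annihilator := by
  ext a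
  rw [Submodule.mem_annihilator, Submodule.mem_annihilator]
  constructor
  · intro h y hy
    have h1 : a • e.symm ⟨y, hy⟩ = 0 := Subtype.ext (h _ (e.symm ⟨y, hy⟩).2)
    have h2 := congrArg e h1
    rw [map_smul, e.apply_symm_apply, map_zero] at h2
    exact congrArg Subtype.val h2
  · intro h x hx
    have h1 : a • e ⟨x, hx⟩ = 0 := Subtype.ext (h _ (e ⟨x, hx⟩).2)
    have h2 := congrArg e.symm h1
    rw [map_smul, e.symm_apply_apply, map_zero] at h2
    exact congrArg Subtype.val h2

lemma not_isoartinian : ¬ IsoArtinian RingEx16 := by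
  intro h
  obtain ⟨n, hn⟩ := h JEx16 (fun k => (J_lt k).le)
  obtain ⟨e⟩ := hn (n + 1) (Nat.le_succ n)
  exact ann_ne n (ann_eq_of_iso e)

end Aux

/-- In `R = ℤ[x₁, x₂, …]/(xᵢxⱼ for j > i, xᵢ³)` with `p = ⟨x₁, x₂, …⟩` one has
`p³ = 0`, `p = (0 : x₁²)`, the zero ideal is `p`-primary, `Ass R = {p} = Min R`,
`R` is not Noetherian, and `R` is not isoartinian, witnessed by the strictly
descending chain `Jₖ = ⟨x_{2k}, x_{2k+1}, …⟩` whose consecutive terms have distinct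
annihilators. -/
theorem stmt16 :
    pEx16 ^ 3 = ⊥ ∧
      pEx16 = Ideal.torsionOf RingEx16 RingEx16 (xEx16 0 ^ 2) ∧
      (⊥ : Ideal RingEx16).IsPrimary ∧ (⊥ : Ideal RingEx16).radical = pEx16 ∧
      associatedPrimes RingEx16 RingEx16 = {pEx16} ∧
      minimalPrimes RingEx16 = {pEx16} ∧
      ¬ IsNoetherianRing RingEx16 ∧
      (∀ k : ℕ, JEx16 (k + 1) < JEx16 k ∧
        (JEx16 (k + 1)).annihilator ≠ (JEx16 k).annihilator) ∧
      ¬ IsoArtinian RingEx16 :=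
  ⟨p_cubed, p_eq_torsion, bot_primary, radical_bot, ass_eq, min_eq, not_noeth,
    fun k => ⟨J_lt k, ann_ne k⟩, not_isoartinian⟩
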